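/- Fix 0 < τ < 1 and set m := (1 − τ²)/τ². For ε > 0 with m(e^ε − 1) < 1 define ψ(ε) := √(1 + m²ε²/4) − mε/2 − √(1 − m(e^ε − 1)). Then ψ(ε)/ε² → (m² + m)/4 as ε → 0⁺; in particular ψ(ε) > 0 for all sufficiently small ε > 0, and ψ(ε) = O(ε²) as ε → 0⁺. -/

import Mathlib

open Real Filter

/-- `ψ(ε) = √(1 + m²ε²/4) − mε/2 − √(1 − m(e^ε − 1))`, the (normalized) per-coordinate
standard-deviation gap between one Schrödinger-bridge step and the time-reversed
Ornstein–Uhlenbeck flow with Gaussian marginals, where `m = (1 − τ²)/τ²`. -/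
noncomputable def revOUGap (m ε : ℝ) : ℝ :=
  Real.sqrt (1 + m ^ 2 * ε ^ 2 / 4) - m * ε / 2
    - Real.sqrt (1 - m * (Real.exp ε - 1))

lemma aux_exp_div :
    Tendsto (fun x : ℝ => (Real.exp x - 1) / x) (nhdsWithin 0 (Set.Ioi 0)) (nhds 1) := by
  have h := (Real.hasDerivAt_exp 0)
  rw [hasDerivAt_iff_tendsto_slope] at h
  have h2 : Tendsto (slope Real.exp 0) (nhdsWithin 0 (Set.Ioi 0)) (nhds (Real.exp 0)) :=
    h.mono_left (nhdsWithin_mono 0 fun x hx => ne_of_gt hx)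
  refine Tendsto.congr (fun x => ?_) (by simpa using h2)
  simp [slope_def_field]

lemma aux_exp_quad :
    Tendsto (fun x : ℝ => (Real.exp x - 1 - x) / x ^ 2) (nhdsWithin 0 (Set.Ioi 0)) (nhds (1/2)) := by
  apply HasDerivAt.lhopital_zero_nhdsGT
      (f' := fun x => Real.exp x - 1) (g' := fun x => 2 * x)
  · filter_upwards with x
    exact ((Real.hasDerivAt_exp x).sub_const 1).sub (hasDerivAt_id' x)
  · filter_upwards with x
    simpa using (hasDerivAt_pow 2 x)
  · filter_upwards [self_mem_nhdsWithin] with x hx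
    have : (0:ℝ) < x := hx
    positivity
  · have h : Tendsto (fun x : ℝ => Real.exp x - 1 - x) (nhds 0) (nhds (Real.exp 0 - 1 - 0)) := by
      exact (Real.continuous_exp.sub continuous_const).sub continuous_id |>.tendsto 0
    have h2 : Tendsto (fun x : ℝ => Real.exp x - 1 - x) (nhdsWithin 0 (Set.Ioi 0))
        (nhds (Real.exp 0 - 1 - 0)) := h.mono_left nhdsWithin_le_nhds
    simpa using h2
  · have h : Tendsto (fun x : ℝ => x ^ 2) (nhds (0:ℝ)) (nhds ((0:ℝ) ^ 2)) :=
      (continuous_pow 2).tendsto 0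
    have h2 : Tendsto (fun x : ℝ => x ^ 2) (nhdsWithin 0 (Set.Ioi 0)) (nhds ((0:ℝ) ^ 2)) :=
      h.mono_left nhdsWithin_le_nhds
    simpa using h2
  · have h : Tendsto (fun x : ℝ => (Real.exp x - 1) / x / 2) (nhdsWithin 0 (Set.Ioi 0))
        (nhds (1/2)) := aux_exp_div.div_const 2
    refine h.congr' ?_
    filter_upwards [self_mem_nhdsWithin] with x hx
    rw [div_div, mul_comm]

/-- For `0 < τ < 1` and `m = (1 − τ²)/τ²`: `ψ(ε)/ε² → (m² + m)/4` as `ε → 0⁺`; in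
particular `ψ(ε) > 0` for all sufficiently small `ε > 0` and `ψ(ε) = O(ε²)` as
`ε → 0⁺`. -/
theorem revOUGap_asymptotics (τ : ℝ) (hτ0 : 0 < τ) (hτ1 : τ < 1) :
    Tendsto (fun ε : ℝ => revOUGap ((1 - τ ^ 2) / τ ^ 2) ε / ε ^ 2)
        (nhdsWithin 0 (Set.Ioi 0))
        (nhds ((((1 - τ ^ 2) / τ ^ 2) ^ 2 + (1 - τ ^ 2) / τ ^ 2) / 4)) ∧
    (∃ ε₁ > (0 : ℝ), ∀ ε : ℝ, 0 < ε → ε < ε₁ →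
        0 < revOUGap ((1 - τ ^ 2) / τ ^ 2) ε) ∧
    (∃ K > (0 : ℝ), ∃ ε₀ > (0 : ℝ), ∀ ε : ℝ, 0 < ε → ε < ε₀ →
        |revOUGap ((1 - τ ^ 2) / τ ^ 2) ε| ≤ K * ε ^ 2) := by
  set m := (1 - τ ^ 2) / τ ^ 2 with hm_def
  have hm : 0 < m := by
    apply div_pos
    · nlinarith
    · positivity
  set L := (m ^ 2 + m) / 4 with hL_def
  have hL : 0 < L := by positivity
  set A := fun ε : ℝ => Real.sqrt (1 + m ^ 2 * ε ^ 2 / 4) with hA_def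
  set B := fun ε : ℝ => Real.sqrt (1 - m * (Real.exp ε - 1)) with hB_def
  have hAcont : Tendsto A (nhdsWithin 0 (Set.Ioi 0)) (nhds 1) := by
    have h : Tendsto A (nhds 0) (nhds (A 0)) := by
      apply ContinuousAt.tendsto
      apply Real.continuous_sqrt.continuousAt.comp
      fun_prop
    have h2 : Tendsto A (nhdsWithin 0 (Set.Ioi 0)) (nhds (A 0)) := h.mono_left nhdsWithin_le_nhds
    simpa [hA_def] using h2
  have hBcont : Tendsto B (nhdsWithin 0 (Set.Ioi 0)) (nhds 1) := by
    have h : Tendsto B (nhds 0) (nhds (B 0)) := by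
      apply ContinuousAt.tendsto
      apply Real.continuous_sqrt.continuousAt.comp
      fun_prop
    have h2 : Tendsto B (nhdsWithin 0 (Set.Ioi 0)) (nhds (B 0)) := h.mono_left nhdsWithin_le_nhds
    simpa [hB_def] using h2
  have hev : ∀ᶠ ε in nhdsWithin 0 (Set.Ioi 0),
      0 < ε ∧ m * (Real.exp ε - 1) < 1 := by
    have h1 : ∀ᶠ ε in nhdsWithin 0 (Set.Ioi 0), m * (Real.exp ε - 1) < 1/2 := by
      have hc : Tendsto (fun ε : ℝ => m * (Real.exp ε - 1)) (nhds 0)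
          (nhds (m * (Real.exp 0 - 1))) :=
        (continuous_const.mul (Real.continuous_exp.sub continuous_const)).tendsto 0
      have hc2 : Tendsto (fun ε : ℝ => m * (Real.exp ε - 1)) (nhdsWithin 0 (Set.Ioi 0))
          (nhds 0) := by simpa using hc.mono_left nhdsWithin_le_nhds
      exact hc2.eventually_lt_const (by norm_num)
    filter_upwards [self_mem_nhdsWithin, h1] with ε hε h1
    exact ⟨hε, by linarith⟩
  -- key algebraic identity
  have hkey : ∀ᶠ ε in nhdsWithin 0 (Set.Ioi 0),
      revOUGap m ε / ε ^ 2 =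
        (m ^ 2 / 4) / (A ε + 1)
          + m * (2 * ((Real.exp ε - 1 - ε) / ε ^ 2)
              + m * ((Real.exp ε - 1) / ε) / (1 + B ε)) / (2 * (1 + B ε)) := by
    filter_upwards [hev] with ε hεev
    obtain ⟨hε, hlt⟩ := hεev
    simp only [hA_def, hB_def]
    set E := Real.exp ε with hE
    set a := Real.sqrt (1 + m ^ 2 * ε ^ 2 / 4) with ha
    set b := Real.sqrt (1 - m * (E - 1)) with hb
    have ha2 : a ^ 2 = 1 + m ^ 2 * ε ^ 2 / 4 := Real.sq_sqrt (by positivity)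
    have hb2 : b ^ 2 = 1 - m * (E - 1) := Real.sq_sqrt (by linarith)
    have hbpos : 0 ≤ b := Real.sqrt_nonneg _
    have hapos : 0 < a := Real.sqrt_pos.2 (by positivity)
    have ha1 : a + 1 ≠ 0 := by positivity
    have hb1 : (1:ℝ) + b ≠ 0 := by positivity
    have hε0 : ε ≠ 0 := ne_of_gt hε
    have e1 : a - 1 = (m ^ 2 * ε ^ 2 / 4) / (a + 1) := by
      rw [eq_div_iff ha1]; nlinarith [ha2]
    have e2 : 1 - b = (m * (E - 1)) / (1 + b) := by
      rw [eq_div_iff hb1]; nlinarith [hb2]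
    have e3 : revOUGap m ε = (m ^ 2 * ε ^ 2 / 4) / (a + 1) + (m * (E - 1)) / (1 + b) - m * ε / 2 := by
      rw [revOUGap, ← hE, ← ha, ← hb]
      linarith [e1, e2]
    rw [e3]
    have e4 : m * ((E - 1) / ε) / (1 + b) = (ε * (1 - b)) / ε ^ 2 := by
      rw [e2]
      field_simp
    rw [e4]
    field_simp
    ring
  have hlim : Tendsto (fun ε : ℝ =>
        (m ^ 2 / 4) / (A ε + 1)
          + m * (2 * ((Real.exp ε - 1 - ε) / ε ^ 2)
              + m * ((Real.exp ε - 1) / ε) / (1 + B ε)) / (2 * (1 + B ε)))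
      (nhdsWithin 0 (Set.Ioi 0)) (nhds L) := by
    have h1 : Tendsto (fun ε : ℝ => (m ^ 2 / 4) / (A ε + 1)) (nhdsWithin 0 (Set.Ioi 0))
        (nhds ((m ^ 2 / 4) / (1 + 1))) :=
      tendsto_const_nhds.div (hAcont.add tendsto_const_nhds) (by norm_num)
    have h2 : Tendsto (fun ε : ℝ => m * (2 * ((Real.exp ε - 1 - ε) / ε ^ 2)
              + m * ((Real.exp ε - 1) / ε) / (1 + B ε)) / (2 * (1 + B ε)))
        (nhdsWithin 0 (Set.Ioi 0))
        (nhds (m * (2 * (1/2) + m * 1 / (1 + 1)) / (2 * (1 + 1)))) := by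
      apply Tendsto.div
      · exact tendsto_const_nhds.mul
          ((aux_exp_quad.const_mul 2).add
            ((aux_exp_div.const_mul m).div (tendsto_const_nhds.add hBcont) (by norm_num)))
      · exact tendsto_const_nhds.mul (tendsto_const_nhds.add hBcont)
      · norm_num
    have h3 := h1.add h2
    convert h3 using 2
    rw [hL_def]; ring
  have hmain : Tendsto (fun ε : ℝ => revOUGap m ε / ε ^ 2) (nhdsWithin 0 (Set.Ioi 0)) (nhds L) :=
    hlim.congr' (by filter_upwards [hkey] with ε h; exact h.symm)
  refine ⟨hmain, ?_, ?_⟩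
  · have hpos : ∀ᶠ ε in nhdsWithin 0 (Set.Ioi 0), 0 < revOUGap m ε / ε ^ 2 :=
      hmain.eventually_const_lt hL
    rw [eventually_nhdsWithin_iff, Metric.eventually_nhds_iff] at hpos
    obtain ⟨δ, hδ, hδ'⟩ := hpos
    refine ⟨δ, hδ, fun ε hε hε' => ?_⟩
    have h := hδ' (y := ε) (by simpa [Real.dist_eq, abs_of_pos hε] using hε') hε
    have hε2 : (0:ℝ) < ε ^ 2 := by positivity
    have h2 := mul_pos h hε2
    rwa [div_mul_cancel₀ _ (ne_of_gt hε2)] at h2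
  · have hb : ∀ᶠ ε in nhdsWithin 0 (Set.Ioi 0), revOUGap m ε / ε ^ 2 < L + 1 :=
      hmain.eventually_lt_const (by linarith)
    have hb2 : ∀ᶠ ε in nhdsWithin 0 (Set.Ioi 0), -(L + 1) < revOUGap m ε / ε ^ 2 :=
      hmain.eventually_const_lt (by linarith)
    rw [eventually_nhdsWithin_iff, Metric.eventually_nhds_iff] at hb hb2
    obtain ⟨δ₁, hδ₁, h₁⟩ := hb
    obtain ⟨δ₂, hδ₂, h₂⟩ := hb2
    refine ⟨L + 1, by linarith, min δ₁ δ₂, lt_min hδ₁ hδ₂, fun ε hε hε' => ?_⟩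
    have hε2 : (0:ℝ) < ε ^ 2 := by positivity
    have hu := h₁ (y := ε)
      (by simp only [Real.dist_eq, sub_zero, abs_of_pos hε]
          exact lt_of_lt_of_le hε' (min_le_left _ _)) hε
    have hl := h₂ (y := ε)
      (by simp only [Real.dist_eq, sub_zero, abs_of_pos hε]
          exact lt_of_lt_of_le hε' (min_le_right _ _)) hε
    have hu' : revOUGap m ε < (L + 1) * ε ^ 2 := (div_lt_iff₀ hε2).1 hu
    have hl' : -(L + 1) * ε ^ 2 < revOUGap m ε := (lt_div_iff₀ hε2).1 hl
    rw [neg_mul] at hl'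
    rw [abs_le]
    exact ⟨hl'.le, hu'.le⟩
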